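/- arXiv:1002.3070 — 5 statements merged into one kernel-verified Lean document; each statement's English description precedes it below -/
import Mathlib

section
/- For t ≠ 0 with |t| < e^{-e}, the second derivative of w̃(t) = t·sin(log log log(1/|t|)) satisfies |w̃''(t)| ≤ (1/(|t|·(log log(1/|t|))·(log(1/|t|)))) · (1 + (2 + log log(1/|t|)) / ((log log(1/|t|))·(log(1/|t|)))). -/
noncomputable def wtil (t : ℝ) : ℝ :=
  t * Real.sin (Real.log (Real.log (Real.log (1 / |t|))))

namespace WtilAux

lemma a_gt {s : ℝ} (h0 : 0 < s) (h1 : s < Real.exp (-Real.exp 1)) :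
    Real.exp 1 < Real.log s⁻¹ := by
  rw [Real.log_inv]
  have := Real.log_lt_log h0 h1
  rw [Real.log_exp] at this
  linarith

lemma b_gt {s : ℝ} (h0 : 0 < s) (h1 : s < Real.exp (-Real.exp 1)) :
    1 < Real.log (Real.log s⁻¹) := by
  have ha := a_gt h0 h1
  calc (1:ℝ) = Real.log (Real.exp 1) := (Real.log_exp 1).symm
    _ < Real.log (Real.log s⁻¹) := Real.log_lt_log (Real.exp_pos 1) ha

lemma hd1 {s : ℝ} (h0 : 0 < s) (h1 : s < Real.exp (-Real.exp 1)) :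
    HasDerivAt (fun x : ℝ => x * Real.sin (Real.log (Real.log (Real.log x⁻¹))))
      (Real.sin (Real.log (Real.log (Real.log s⁻¹))) -
        Real.cos (Real.log (Real.log (Real.log s⁻¹))) /
          (Real.log s⁻¹ * Real.log (Real.log s⁻¹))) s := by
  have ha : Real.exp 1 < Real.log s⁻¹ := a_gt h0 h1
  have hb : 1 < Real.log (Real.log s⁻¹) := b_gt h0 h1
  have hapos : 0 < Real.log s⁻¹ := lt_trans (Real.exp_pos 1) ha
  have ha0 : Real.log s⁻¹ ≠ 0 := ne_of_gt hapos
  have hb0 : Real.log (Real.log s⁻¹) ≠ 0 := by linarith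
  have hs0 : s ≠ 0 := h0.ne'
  have h2 : HasDerivAt (fun x : ℝ => Real.log x⁻¹) (-s⁻¹) s := by
    have := (Real.hasDerivAt_log hs0).neg
    simp only [Real.log_inv]
    exact this
  have h3 := h2.log ha0
  have h4 := h3.log hb0
  have h5 := h4.sin
  have h6 := (hasDerivAt_id s).mul h5
  refine HasDerivAt.congr_deriv h6 ?_
  symm
  simp only [id]
  field_simp
  ring_nf
  try simp only [mul_inv_cancel₀ hs0, mul_inv_cancel₀ ha0,
    mul_inv_cancel₀ hb0, one_mul, mul_one]
  try ring

lemma hd2 {s : ℝ} (h0 : 0 < s) (h1 : s < Real.exp (-Real.exp 1)) :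
    HasDerivAt (fun x : ℝ => Real.sin (Real.log (Real.log (Real.log x⁻¹))) -
        Real.cos (Real.log (Real.log (Real.log x⁻¹))) /
          (Real.log x⁻¹ * Real.log (Real.log x⁻¹)))
      (-(Real.cos (Real.log (Real.log (Real.log s⁻¹))) /
            (s * (Real.log s⁻¹ * Real.log (Real.log s⁻¹))))
        - Real.sin (Real.log (Real.log (Real.log s⁻¹))) /
            (s * (Real.log s⁻¹ * Real.log (Real.log s⁻¹))^2)
        - Real.cos (Real.log (Real.log (Real.log s⁻¹))) * (Real.log (Real.log s⁻¹) + 1) /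
            (s * (Real.log s⁻¹ * Real.log (Real.log s⁻¹))^2)) s := by
  have ha : Real.exp 1 < Real.log s⁻¹ := a_gt h0 h1
  have hb : 1 < Real.log (Real.log s⁻¹) := b_gt h0 h1
  have hapos : 0 < Real.log s⁻¹ := lt_trans (Real.exp_pos 1) ha
  have hbpos : 0 < Real.log (Real.log s⁻¹) := by linarith
  have ha0 : Real.log s⁻¹ ≠ 0 := ne_of_gt hapos
  have hb0 : Real.log (Real.log s⁻¹) ≠ 0 := ne_of_gt hbpos
  have hs0 : s ≠ 0 := h0.ne'
  have h2 : HasDerivAt (fun x : ℝ => Real.log x⁻¹) (-s⁻¹) s := by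
    have := (Real.hasDerivAt_log hs0).neg
    simp only [Real.log_inv]
    exact this
  have h3 := h2.log ha0
  have h4 := h3.log hb0
  -- clean derivative of u
  have hu : HasDerivAt (fun x : ℝ => Real.log (Real.log (Real.log x⁻¹)))
      (-(1 / (s * (Real.log s⁻¹ * Real.log (Real.log s⁻¹))))) s := by
    refine HasDerivAt.congr_deriv h4 ?_
    symm
    field_simp
    try ring_nf
    try simp only [mul_inv_cancel₀ hs0, mul_inv_cancel₀ ha0,
      mul_inv_cancel₀ hb0, one_mul, mul_one]
    try ring
  -- derivative of P = a*b
  have hP : HasDerivAt (fun x : ℝ => Real.log x⁻¹ * Real.log (Real.log x⁻¹))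
      (-(1/s) * (Real.log (Real.log s⁻¹) + 1)) s := by
    have := h2.mul h3
    refine HasDerivAt.congr_deriv this ?_
    symm
    field_simp
    ring_nf
    try simp only [mul_inv_cancel₀ hs0, mul_inv_cancel₀ ha0,
      mul_inv_cancel₀ hb0, one_mul, mul_one]
    try ring
  have hP0 : Real.log s⁻¹ * Real.log (Real.log s⁻¹) ≠ 0 := by positivity
  have hquot := (hu.cos.div hP hP0)
  have hmain := hu.sin.sub hquot
  have hgen : ∀ (S A B CO SI : ℝ), S ≠ 0 → A ≠ 0 → B ≠ 0 →
      -(CO / (S * (A * B))) - SI / (S * (A * B)^2) - CO * (B + 1) / (S * (A * B)^2) =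
        CO * -(1 / (S * (A * B))) -
          (-SI * -(1 / (S * (A * B))) * (A * B) - CO * (-(1 / S) * (B + 1))) / (A * B)^2 := by
    intro S A B CO SI hS hA hB
    field_simp
    ring
  refine HasDerivAt.congr_deriv hmain ?_
  symm
  exact hgen s (Real.log s⁻¹) (Real.log (Real.log s⁻¹))
    (Real.cos (Real.log (Real.log (Real.log s⁻¹)))) (Real.sin (Real.log (Real.log (Real.log s⁻¹))))
    hs0 ha0 hb0

lemma key {s : ℝ} (h0 : 0 < s) (h1 : s < Real.exp (-Real.exp 1)) :
    |deriv (deriv wtil) s| ≤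
      (1 / (|s| * Real.log (Real.log (1 / |s|)) * Real.log (1 / |s|))) *
        (1 + (2 + Real.log (Real.log (1 / |s|))) /
          (Real.log (Real.log (1 / |s|)) * Real.log (1 / |s|))) := by
  simp only [abs_of_pos h0, one_div]
  -- first derivative eventually
  have hset : Set.Ioo (0:ℝ) (Real.exp (-Real.exp 1)) ∈ nhds s :=
    isOpen_Ioo.mem_nhds ⟨h0, h1⟩
  have hEq : ∀ x ∈ Set.Ioo (0:ℝ) (Real.exp (-Real.exp 1)), deriv wtil x =
      Real.sin (Real.log (Real.log (Real.log x⁻¹))) -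
        Real.cos (Real.log (Real.log (Real.log x⁻¹))) /
          (Real.log x⁻¹ * Real.log (Real.log x⁻¹)) := by
    intro x hx
    have hw : wtil =ᶠ[nhds x] fun y => y * Real.sin (Real.log (Real.log (Real.log y⁻¹))) := by
      filter_upwards [isOpen_Ioi.mem_nhds hx.1] with y hy
      simp only [wtil, abs_of_pos (show (0:ℝ) < y from hy), one_div]
    rw [hw.deriv_eq, (hd1 hx.1 hx.2).deriv]
  have hder : deriv wtil =ᶠ[nhds s] fun x =>
      Real.sin (Real.log (Real.log (Real.log x⁻¹))) -
        Real.cos (Real.log (Real.log (Real.log x⁻¹))) /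
          (Real.log x⁻¹ * Real.log (Real.log x⁻¹)) :=
    Filter.eventuallyEq_of_mem hset hEq
  rw [hder.deriv_eq, (hd2 h0 h1).deriv]
  -- now bound the explicit expression
  have ha : Real.exp 1 < Real.log s⁻¹ := a_gt h0 h1
  have hb : 1 < Real.log (Real.log s⁻¹) := b_gt h0 h1
  set a := Real.log s⁻¹ with ha_def
  set b := Real.log a with hb_def
  set c := Real.log b with hc_def
  have hapos : 0 < a := lt_trans (Real.exp_pos 1) ha
  have hbpos : 0 < b := by linarith
  have hsP : 0 < s * (a * b) := by positivity
  have hsP2 : 0 < s * (a * b)^2 := by positivity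
  have hRHS : (s * b * a)⁻¹ * (1 + (2 + b) / (b * a)) =
      1 / (s * (a * b)) + 1 / (s * (a * b)^2) + (b + 1) / (s * (a * b)^2) := by
    field_simp
    ring
  rw [hRHS]
  have tri : |-(Real.cos c / (s * (a * b)))
      - Real.sin c / (s * (a * b)^2)
      - Real.cos c * (b + 1) / (s * (a * b)^2)| ≤
      |Real.cos c / (s * (a * b))| + |Real.sin c / (s * (a * b)^2)| +
        |Real.cos c * (b + 1) / (s * (a * b)^2)| := by
    calc |-(Real.cos c / (s * (a * b))) - Real.sin c / (s * (a * b)^2)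
          - Real.cos c * (b + 1) / (s * (a * b)^2)|
        = |(-(Real.cos c / (s * (a * b)))) + (-(Real.sin c / (s * (a * b)^2)))
            + (-(Real.cos c * (b + 1) / (s * (a * b)^2)))| := by ring_nf
      _ ≤ |-(Real.cos c / (s * (a * b)))| + |-(Real.sin c / (s * (a * b)^2))|
            + |-(Real.cos c * (b + 1) / (s * (a * b)^2))| := abs_add_three _ _ _
      _ = |Real.cos c / (s * (a * b))| + |Real.sin c / (s * (a * b)^2)| +
            |Real.cos c * (b + 1) / (s * (a * b)^2)| := by rw [abs_neg, abs_neg, abs_neg]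
  have e1 : |Real.cos c / (s * (a * b))| ≤ 1 / (s * (a * b)) := by
    rw [abs_div, abs_of_pos hsP]
    gcongr
    exact Real.abs_cos_le_one c
  have e2 : |Real.sin c / (s * (a * b)^2)| ≤ 1 / (s * (a * b)^2) := by
    rw [abs_div, abs_of_pos hsP2]
    gcongr
    exact Real.abs_sin_le_one c
  have e3 : |Real.cos c * (b + 1) / (s * (a * b)^2)| ≤ (b + 1) / (s * (a * b)^2) := by
    rw [abs_div, abs_of_pos hsP2]
    gcongr
    calc |Real.cos c * (b + 1)| = |Real.cos c| * |b + 1| := abs_mul _ _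
      _ = |Real.cos c| * (b + 1) := by rw [abs_of_pos (by linarith : (0:ℝ) < b + 1)]
      _ ≤ 1 * (b + 1) := by
          have := Real.abs_cos_le_one c
          nlinarith [abs_nonneg (Real.cos c)]
      _ = b + 1 := one_mul _
  linarith [tri, e1, e2, e3]

end WtilAux

/-- For t ≠ 0 with |t| < e^{-e}, the second derivative of w̃ satisfies
|w̃''(t)| ≤ (1/(|t|·(log log(1/|t|))·(log(1/|t|)))) ·
  (1 + (2 + log log(1/|t|)) / ((log log(1/|t|))·(log(1/|t|)))). -/
theorem stmt2 (t : ℝ) (ht : t ≠ 0) (ht' : |t| < Real.exp (-Real.exp 1)) :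
    |deriv (deriv wtil) t| ≤
      (1 / (|t| * Real.log (Real.log (1 / |t|)) * Real.log (1 / |t|))) *
        (1 + (2 + Real.log (Real.log (1 / |t|))) /
          (Real.log (Real.log (1 / |t|)) * Real.log (1 / |t|))) := by
  rcases ht.lt_or_gt with hneg | hpos
  · have hodd : wtil = fun x => -wtil (-x) := by
      funext x
      simp only [wtil, abs_neg]
      ring
    have h1 : deriv wtil = fun x => deriv wtil (-x) := by
      funext x
      conv_lhs => rw [hodd]
      rw [deriv.fun_neg, deriv_comp_neg, neg_neg]
    have h2 : deriv (deriv wtil) t = -deriv (deriv wtil) (-t) := by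
      conv_lhs => rw [h1]
      rw [deriv_comp_neg]
    rw [h2, abs_neg]
    have key' := WtilAux.key (s := -t) (by linarith)
      (by rwa [abs_of_neg hneg] at ht')
    rwa [abs_neg] at key'
  · exact WtilAux.key hpos (by rwa [abs_of_pos hpos] at ht')
end

section
/- The function t ↦ |t|·|w̃''(t)| tends to 0 as t → 0 (t ≠ 0), where w̃(t) = t·sin(log log log(1/|t|)). -/
open Real Filter Set

namespace Stmt3Aux

noncomputable def A (t : ℝ) : ℝ := -Real.log t
noncomputable def B (t : ℝ) : ℝ := Real.log (A t)
noncomputable def L (t : ℝ) : ℝ := Real.log (B t)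

def S : Set ℝ := {t : ℝ | t ≠ 0 ∧ |t| < Real.exp (-Real.exp 1)}

lemma isOpen_S : IsOpen S := by
  have : S = {(0:ℝ)}ᶜ ∩ (fun t : ℝ => |t|) ⁻¹' Iio (Real.exp (-Real.exp 1)) := rfl
  rw [this]
  exact isOpen_compl_singleton.inter (isOpen_Iio.preimage continuous_abs)

lemma A_gt {t : ℝ} (ht : t ∈ S) : Real.exp 1 < A t := by
  obtain ⟨ht0, hlt⟩ := ht
  have h1 : Real.log |t| < -Real.exp 1 := by
    have := Real.log_lt_log (abs_pos.2 ht0) hlt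
    rwa [Real.log_exp] at this
  rw [Real.log_abs] at h1
  simp only [A]
  linarith

lemma A_pos {t : ℝ} (ht : t ∈ S) : 0 < A t :=
  lt_trans (Real.exp_pos 1) (A_gt ht)

lemma B_gt {t : ℝ} (ht : t ∈ S) : 1 < B t := by
  have := A_gt ht
  rw [B, Real.lt_log_iff_exp_lt (A_pos ht)]
  exact this

lemma B_pos {t : ℝ} (ht : t ∈ S) : 0 < B t := lt_trans one_pos (B_gt ht)

lemma hasDerivAt_A {t : ℝ} (ht0 : t ≠ 0) : HasDerivAt A (-t⁻¹) t :=
  (Real.hasDerivAt_log ht0).neg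

lemma hasDerivAt_B {t : ℝ} (ht : t ∈ S) :
    HasDerivAt B ((A t)⁻¹ * -t⁻¹) t :=
  (Real.hasDerivAt_log (A_pos ht).ne').comp t (hasDerivAt_A ht.1)

lemma hasDerivAt_L {t : ℝ} (ht : t ∈ S) :
    HasDerivAt L ((B t)⁻¹ * ((A t)⁻¹ * -t⁻¹)) t :=
  (Real.hasDerivAt_log (B_pos ht).ne').comp t (hasDerivAt_B ht)

lemma wtil_eq : wtil = fun t => t * Real.sin (L t) := by
  funext t
  simp [wtil, L, B, A, one_div, Real.log_inv, Real.log_abs]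

/-- Explicit first derivative on S. -/
noncomputable def g (t : ℝ) : ℝ :=
  Real.sin (L t) - Real.cos (L t) * (A t * B t)⁻¹

lemma hasDerivAt_wtil {t : ℝ} (ht : t ∈ S) : HasDerivAt wtil (g t) t := by
  rw [wtil_eq]
  have h : HasDerivAt (fun y => y * Real.sin (L y)) _ t := (hasDerivAt_id t).mul ((Real.hasDerivAt_sin (L t)).comp t (hasDerivAt_L ht))
  convert h using 1
  have ht0 : t ≠ 0 := ht.1
  have ha : A t ≠ 0 := (A_pos ht).ne'
  have hb : B t ≠ 0 := (B_pos ht).ne'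
  simp only [g, id]
  field_simp
  ring

lemma deriv_wtil_eq {t : ℝ} (ht : t ∈ S) : deriv wtil t = g t :=
  (hasDerivAt_wtil ht).deriv

lemma hasDerivAt_g {t : ℝ} (ht : t ∈ S) :
    HasDerivAt g
      (Real.cos (L t) * ((B t)⁻¹ * ((A t)⁻¹ * -t⁻¹)) -
        ((-Real.sin (L t) * ((B t)⁻¹ * ((A t)⁻¹ * -t⁻¹))) * (A t * B t)⁻¹ +
          Real.cos (L t) *
            (-(-t⁻¹ * B t + A t * ((A t)⁻¹ * -t⁻¹)) / (A t * B t) ^ 2))) t := by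
  have hL := hasDerivAt_L ht
  have hsin := (Real.hasDerivAt_sin (L t)).comp t hL
  have hcos := (Real.hasDerivAt_cos (L t)).comp t hL
  have hAB := (hasDerivAt_A ht.1).mul (hasDerivAt_B ht)
  have hab : A t * B t ≠ 0 := (mul_pos (A_pos ht) (B_pos ht)).ne'
  exact hsin.sub (hcos.mul (hAB.inv hab))

lemma deriv2_bound {t : ℝ} (ht : t ∈ S) :
    |t| * |deriv (deriv wtil) t| ≤ 4 / A t := by
  have ht0 : t ≠ 0 := ht.1
  have ha1 : 1 < A t := by nlinarith [Real.exp_one_gt_d9, A_gt ht]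
  have hb1 : 1 < B t := B_gt ht
  have ha : (0:ℝ) < A t := by linarith
  have hb : (0:ℝ) < B t := by linarith
  have hev : deriv wtil =ᶠ[nhds t] g := by
    filter_upwards [isOpen_S.mem_nhds ht] with s hs using deriv_wtil_eq hs
  have h2 : deriv (deriv wtil) t = deriv g t := hev.deriv_eq
  rw [h2, (hasDerivAt_g ht).deriv, ← abs_mul]
  set a := A t with hadef
  set b := B t with hbdef
  have hab : (1:ℝ) < a * b := by nlinarith
  have key : t * (Real.cos (L t) * (b⁻¹ * (a⁻¹ * -t⁻¹)) -
        ((-Real.sin (L t) * (b⁻¹ * (a⁻¹ * -t⁻¹))) * (a * b)⁻¹ +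
          Real.cos (L t) * (-(-t⁻¹ * b + a * (a⁻¹ * -t⁻¹)) / (a * b) ^ 2)))
      = -(Real.cos (L t) / (a*b)) + -(Real.sin (L t) / (a*b)^2)
        + -(Real.cos (L t) * (b+1) / (a*b)^2) := by
    field_simp
    ring
  rw [key]
  have e1 : |(-(Real.cos (L t) / (a*b)))| ≤ 1/(a*b) := by
    rw [abs_neg, abs_div, abs_of_pos (by linarith : (0:ℝ) < a*b)]
    gcongr
    exact Real.abs_cos_le_one _
  have e2 : |(-(Real.sin (L t) / (a*b)^2))| ≤ 1/(a*b)^2 := by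
    rw [abs_neg, abs_div, abs_of_pos (by positivity : (0:ℝ) < (a*b)^2)]
    gcongr
    exact Real.abs_sin_le_one _
  have e3 : |(-(Real.cos (L t) * (b+1) / (a*b)^2))| ≤ (b+1)/(a*b)^2 := by
    rw [abs_neg, abs_div, abs_of_pos (by positivity : (0:ℝ) < (a*b)^2), abs_mul,
      abs_of_pos (by linarith : (0:ℝ) < b+1)]
    gcongr
    nlinarith [Real.abs_cos_le_one (L t)]
  have h3 := abs_add_three (-(Real.cos (L t) / (a*b))) (-(Real.sin (L t) / (a*b)^2))
    (-(Real.cos (L t) * (b+1) / (a*b)^2))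
  have f1 : 1/(a*b) ≤ 1/a := one_div_le_one_div_of_le ha (by nlinarith)
  have f2 : 1/(a*b)^2 ≤ 1/a := one_div_le_one_div_of_le ha (by nlinarith)
  have f3 : (b+1)/(a*b)^2 ≤ 2/a := by
    rw [div_le_div_iff₀ (by positivity) ha]
    nlinarith
  have f4 : 4/a = 1/a + 1/a + 2/a := by ring
  linarith

end Stmt3Aux

open Real Filter Set Stmt3Aux in
/-- The function t ↦ |t|·|w̃''(t)| tends to 0 as t → 0 through nonzero values. -/
theorem stmt3 :
    Filter.Tendsto (fun t : ℝ => |t| * |deriv (deriv wtil) t|)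
      (nhdsWithin 0 {(0 : ℝ)}ᶜ) (nhds 0) := by
  have hA : Tendsto A (nhdsWithin 0 {(0:ℝ)}ᶜ) atTop := by
    exact tendsto_neg_atBot_atTop.comp Real.tendsto_log_nhdsNE_zero
  have h4 : Tendsto (fun t => 4 / A t) (nhdsWithin 0 {(0:ℝ)}ᶜ) (nhds 0) :=
    tendsto_const_nhds.div_atTop hA
  have hmem : ∀ᶠ t in nhdsWithin 0 {(0:ℝ)}ᶜ, t ∈ S := by
    have h1 : ∀ᶠ t : ℝ in nhds 0, |t| < Real.exp (-Real.exp 1) := by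
      filter_upwards [Metric.ball_mem_nhds (0:ℝ) (Real.exp_pos _)] with t htb
      simpa [Real.dist_eq] using htb
    filter_upwards [eventually_nhdsWithin_of_eventually_nhds h1, self_mem_nhdsWithin]
      with t h1 h2
    exact ⟨h2, h1⟩
  exact squeeze_zero' (Eventually.of_forall fun t => by positivity)
    (hmem.mono fun t h => deriv2_bound h) h4
end

section
/- Let ψ¹(t) = 402/(|t|·log log(1/(5|t|))) for t ≠ 0. Let 0 < b ≤ T with T = e^{-e}/2 and suppose v : [0, b/5] → ℝ satisfies |v(t)| ≥ 5t for all t ∈ [0, b/5]. Then ∫_0^{b/5} min(5t·ψ¹(t), ψ¹(t)·|v(t)|) dt ≥ 201·b / (log log(1/b)). -/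
noncomputable def psi1 (t : ℝ) : ℝ :=
  402 / (|t| * Real.log (Real.log (1 / (5 * |t|))))

/-- `x ↦ x * log (-log x)` is monotone on `(0, e^{-e}/2]`. -/
lemma aux_mono (s bb : ℝ) (hs : 0 < s) (hsb : s ≤ bb)
    (hbB : bb ≤ Real.exp (-Real.exp 1) / 2) :
    s * Real.log (-Real.log s) ≤ bb * Real.log (-Real.log bb) := by
  rcases eq_or_lt_of_le hsb with h | h
  · rw [h]
  have he1 : (1 : ℝ) ≤ Real.exp 1 := by
    have := Real.add_one_le_exp (1 : ℝ); linarith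
  have hlog2 : (0 : ℝ) < Real.log 2 := Real.log_pos (by norm_num)
  -- basic estimate on log x for x in the interval
  have key : ∀ x ∈ Set.Icc s bb, Real.log x ≤ -Real.exp 1 - Real.log 2 := by
    intro x hx
    have hx0 : 0 < x := lt_of_lt_of_le hs hx.1
    have h1 : Real.log x ≤ Real.log (Real.exp (-Real.exp 1) / 2) :=
      Real.log_le_log hx0 (hx.2.trans hbB)
    rwa [Real.log_div (Real.exp_ne_zero _) two_ne_zero, Real.log_exp] at h1
  have hcont : ContinuousOn (fun x : ℝ => x * Real.log (-Real.log x)) (Set.Icc s bb) := by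
    apply ContinuousOn.mul continuousOn_id
    apply Real.continuousOn_log.comp (ContinuousOn.neg
      (Real.continuousOn_log.comp continuousOn_id ?_)) ?_
    · intro x hx
      have hx0 : 0 < x := lt_of_lt_of_le hs hx.1
      simpa using hx0.ne'
    · intro x hx
      have := key x hx
      have : (0:ℝ) < -Real.log x := by linarith [Real.exp_pos (1:ℝ)]
      simpa using this.ne'
  have hmono : StrictMonoOn (fun x : ℝ => x * Real.log (-Real.log x)) (Set.Icc s bb) := by
    apply strictMonoOn_of_deriv_pos (convex_Icc s bb) hcont
    intro x hx
    rw [interior_Icc] at hx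
    have hx0 : 0 < x := lt_trans hs hx.1
    have hkey : Real.log x ≤ -Real.exp 1 - Real.log 2 := key x (Set.mem_Icc.2 ⟨hx.1.le, hx.2.le⟩)
    have hlxneg : Real.log x < 0 := by linarith [Real.exp_pos (1:ℝ)]
    have hnl : (0:ℝ) < -Real.log x := by linarith
    have h1 : HasDerivAt Real.log x⁻¹ x := Real.hasDerivAt_log hx0.ne'
    have h2 : HasDerivAt (fun y : ℝ => -Real.log y) (-x⁻¹) x := h1.neg
    have h3 : HasDerivAt (fun y : ℝ => Real.log (-Real.log y)) (-x⁻¹ / -Real.log x) x :=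
      h2.log hnl.ne'
    have h4 : HasDerivAt (fun y : ℝ => y * Real.log (-Real.log y))
        (1 * Real.log (-Real.log x) + x * (-x⁻¹ / -Real.log x)) x :=
      (hasDerivAt_id x).mul h3
    rw [h4.deriv]
    have hsimp : x * (-x⁻¹ / -Real.log x) = 1 / Real.log x := by
      rw [neg_div_neg_eq, ← mul_div_assoc, mul_inv_cancel₀ hx0.ne']
    rw [hsimp]
    have hge1 : (1:ℝ) ≤ Real.log (-Real.log x) := by
      have : Real.log (Real.exp 1) ≤ Real.log (-Real.log x) :=
        Real.log_le_log (Real.exp_pos 1) (by linarith)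
      rwa [Real.log_exp] at this
    have hgt : (-1 : ℝ) < 1 / Real.log x := by
      rw [lt_div_iff_of_neg hlxneg]
      linarith
    linarith
  exact (hmono (Set.mem_Icc.2 ⟨le_refl s, hsb⟩) (Set.mem_Icc.2 ⟨hsb, le_refl bb⟩) h).le

/-- If 0 < b ≤ T = e^{-e}/2 and |v(t)| ≥ 5t on [0, b/5], then
∫_0^{b/5} min(5t·ψ¹(t), ψ¹(t)·|v(t)|) dt ≥ 201·b/(log log(1/b)). -/
theorem stmt11 (b : ℝ) (hb : 0 < b) (hbT : b ≤ Real.exp (-Real.exp 1) / 2)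
    (v : ℝ → ℝ) (hv : ∀ t ∈ Set.Icc (0 : ℝ) (b / 5), 5 * t ≤ |v t|) :
    201 * b / Real.log (Real.log (1 / b)) ≤
      ∫ t in (0 : ℝ)..(b / 5), min (5 * t * psi1 t) (psi1 t * |v t|) := by
  have he1 : (1 : ℝ) ≤ Real.exp 1 := by
    have := Real.add_one_le_exp (1 : ℝ); linarith
  have hlog2 : (0 : ℝ) < Real.log 2 := Real.log_pos (by norm_num)
  have hble : (0:ℝ) ≤ b / 5 := by linarith
  -- bound on log b
  have hlogb : Real.log b ≤ -Real.exp 1 - Real.log 2 := by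
    have h1 : Real.log b ≤ Real.log (Real.exp (-Real.exp 1) / 2) := Real.log_le_log hb hbT
    rwa [Real.log_div (Real.exp_ne_zero _) two_ne_zero, Real.log_exp] at h1
  have hlb1 : Real.log (1 / b) = -Real.log b := by rw [one_div, Real.log_inv]
  set D := Real.log (Real.log (1 / b)) with hD
  have hD1 : (1:ℝ) ≤ D := by
    rw [hD, hlb1]
    have : Real.log (Real.exp 1) ≤ Real.log (-Real.log b) :=
      Real.log_le_log (Real.exp_pos 1) (by linarith)
    rwa [Real.log_exp] at this
  have hDpos : (0:ℝ) < D := lt_of_lt_of_le one_pos hD1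
  set f : ℝ → ℝ := fun t => 2010 / Real.log (Real.log (1 / (5 * t))) with hf
  -- the function L(t) is ≥ D on (0, b/5]
  have hL : ∀ t : ℝ, 0 < t → t ≤ b / 5 → D ≤ Real.log (Real.log (1 / (5 * t))) := by
    intro t ht htb
    have h5t : 0 < 5 * t := by linarith
    have h5tb : 5 * t ≤ b := by linarith
    have hlog5t : Real.log (5 * t) ≤ -Real.exp 1 - Real.log 2 := by
      have := Real.log_le_log h5t h5tb
      linarith [hlogb]
    have hlog1 : Real.log (1 / (5 * t)) = -Real.log (5 * t) := by rw [one_div, Real.log_inv]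
    rw [hD, hlb1, hlog1]
    apply Real.log_le_log
    · linarith [Real.exp_pos (1:ℝ)]
    · have := Real.log_le_log h5t h5tb
      linarith
  -- the integrand f is positive and identifies with the min expression
  have heq : Set.EqOn (fun t => min (5 * t * psi1 t) (psi1 t * |v t|)) f
      (Set.uIcc (0:ℝ) (b / 5)) := by
    intro t ht
    rw [Set.uIcc_of_le hble] at ht
    rcases eq_or_lt_of_le ht.1 with h0 | h0
    · simp only [hf, ← h0]
      norm_num [psi1]
    · have habs : |t| = t := abs_of_pos h0
      have hLt : (0:ℝ) < Real.log (Real.log (1 / (5 * t))) :=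
        lt_of_lt_of_le hDpos (hL t h0 ht.2)
      have hpsi : psi1 t = 402 / (t * Real.log (Real.log (1 / (5 * t)))) := by
        rw [psi1, habs]
      have hpsipos : 0 ≤ psi1 t := by
        rw [hpsi]
        positivity
      have hmin : min (5 * t * psi1 t) (psi1 t * |v t|) = 5 * t * psi1 t := by
        apply min_eq_left
        calc 5 * t * psi1 t = psi1 t * (5 * t) := by ring
        _ ≤ psi1 t * |v t| := by
            apply mul_le_mul_of_nonneg_left (hv t ⟨h0.le, ht.2⟩) hpsipos
      simp only [hf]
      rw [hmin, hpsi]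
      have ht0 : t ≠ 0 := h0.ne'
      have hLne : Real.log (Real.log (1 / (5 * t))) ≠ 0 := hLt.ne'
      field_simp
      ring
  rw [intervalIntegral.integral_congr heq]
  -- comparison function
  set φ : ℝ → ℝ := fun t => 10050 / (b * D) * t with hφ
  have hptwise : ∀ t ∈ Set.Icc (0:ℝ) (b / 5), φ t ≤ f t := by
    intro t ht
    rcases eq_or_lt_of_le ht.1 with h0 | h0
    · simp only [hφ, hf, ← h0]
      norm_num
    · have h5t : 0 < 5 * t := by linarith
      have h5tb : 5 * t ≤ b := by linarith [ht.2]
      have hLt : D ≤ Real.log (Real.log (1 / (5 * t))) := hL t h0 ht.2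
      have hLtpos : 0 < Real.log (Real.log (1 / (5 * t))) := lt_of_lt_of_le hDpos hLt
      have hkey : 5 * t * Real.log (Real.log (1 / (5 * t))) ≤ b * D := by
        have := aux_mono (5 * t) b h5t h5tb hbT
        rw [hD, hlb1, (by rw [one_div, Real.log_inv] : Real.log (1 / (5 * t)) = -Real.log (5 * t))]
        exact this
      simp only [hφ, hf]
      rw [div_mul_eq_mul_div, div_le_div_iff₀ (by positivity) hLtpos]
      nlinarith
  -- integrability of f
  have hmeas : Measurable f := by
    apply Measurable.div measurable_const
    exact Real.measurable_log.comp (Real.measurable_log.comp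
      (Measurable.div measurable_const (measurable_const.mul measurable_id)))
  have hfint : IntervalIntegrable f MeasureTheory.volume 0 (b / 5) := by
    rw [intervalIntegrable_iff_integrableOn_Ioc_of_le hble]
    have hbound : MeasureTheory.IntegrableOn (fun _ : ℝ => 2010 / D) (Set.Ioc 0 (b/5))
        MeasureTheory.volume :=
      (MeasureTheory.integrableOn_const_iff).mpr (Or.inr measure_Ioc_lt_top)
    apply MeasureTheory.Integrable.mono' hbound hmeas.aestronglyMeasurable.restrict
    filter_upwards [MeasureTheory.ae_restrict_mem measurableSet_Ioc] with t ht
    have hLt : D ≤ Real.log (Real.log (1 / (5 * t))) := hL t ht.1 ht.2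
    have hLtpos : 0 < Real.log (Real.log (1 / (5 * t))) := lt_of_lt_of_le hDpos hLt
    simp only [hf, Real.norm_eq_abs]
    rw [abs_of_nonneg (by positivity)]
    exact div_le_div_of_nonneg_left (by norm_num) hDpos hLt
  have hφint : IntervalIntegrable φ MeasureTheory.volume 0 (b / 5) :=
    (continuous_const.mul continuous_id).intervalIntegrable 0 (b / 5)
  have hmono := intervalIntegral.integral_mono_on hble hφint hfint hptwise
  have hcalc : ∫ t in (0:ℝ)..(b / 5), φ t = 201 * b / D := by
    rw [hφ]
    rw [intervalIntegral.integral_const_mul, integral_id]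
    field_simp
    ring
  rw [hcalc] at hmono
  exact hmono
end

section
/- Let d ∈ (0, e^{-e}) and let l̃' = sin(log log log(1/d)). Then for all t ∈ (0, d), |l̃' − w̃'(t)| ≤ d / (t·(log log(1/d))·(log(1/d))), where w̃'(t) = sin(log log log(1/t)) − cos(log log log(1/t))/((log log(1/t))(log(1/t))). -/
/-- Let d ∈ (0, e^{-e}) and l̃' = sin(log log log(1/d)). Then for all t ∈ (0, d),
|l̃' − w̃'(t)| ≤ d / (t·(log log(1/d))·(log(1/d))). -/
theorem stmt12 (d t : ℝ) (hd0 : 0 < d) (hd : d < Real.exp (-Real.exp 1))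
    (ht : t ∈ Set.Ioo (0 : ℝ) d) :
    |Real.sin (Real.log (Real.log (Real.log (1 / d)))) -
        (Real.sin (Real.log (Real.log (Real.log (1 / t)))) -
          Real.cos (Real.log (Real.log (Real.log (1 / t)))) /
            (Real.log (Real.log (1 / t)) * Real.log (1 / t)))| ≤
      d / (t * Real.log (Real.log (1 / d)) * Real.log (1 / d)) := by
  obtain ⟨ht0, htd⟩ := ht
  have he : (1:ℝ) < Real.exp 1 := by
    have := Real.exp_one_gt_d9; linarith
  -- basic positivity facts for any s in (0, exp(-e))
  have key : ∀ s : ℝ, 0 < s → s < Real.exp (-Real.exp 1) →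
      Real.exp 1 < Real.log (1/s) ∧ 1 < Real.log (Real.log (1/s)) := by
    intro s hs hsd
    have h1 : Real.exp 1 < Real.log (1/s) := by
      rw [one_div, Real.log_inv]
      have := Real.log_lt_log hs hsd
      rw [Real.log_exp] at this
      linarith
    refine ⟨h1, ?_⟩
    have := Real.log_lt_log (Real.exp_pos 1) h1
    rwa [Real.log_exp] at this
  obtain ⟨hL1d, hL2d⟩ := key d hd0 hd
  have hL1d0 : 0 < Real.log (1/d) := lt_trans (by linarith) hL1d
  have hL2d0 : 0 < Real.log (Real.log (1/d)) := by linarith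
  -- the function and its derivative
  set F : ℝ → ℝ := fun s => Real.sin (Real.log (Real.log (Real.log (1/s)))) with hF
  set F' : ℝ → ℝ := fun s => Real.cos (Real.log (Real.log (Real.log (1/s)))) *
      ((Real.log (Real.log (1/s)))⁻¹ * ((Real.log (1/s))⁻¹ * -s⁻¹)) with hF'
  set C : ℝ := 1 / (t * Real.log (Real.log (1/d)) * Real.log (1/d)) with hC
  have hC0 : 0 < C := by
    apply one_div_pos.mpr; positivity
  have hmem : ∀ s ∈ Set.Icc t d, 0 < s ∧ s < Real.exp (-Real.exp 1) := by
    intro s hs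
    exact ⟨lt_of_lt_of_le ht0 hs.1, lt_of_le_of_lt hs.2 hd⟩
  have hderiv : ∀ s ∈ Set.Icc t d, HasDerivAt F (F' s) s := by
    intro s hs
    obtain ⟨hs0, hse⟩ := hmem s hs
    obtain ⟨hL1s, hL2s⟩ := key s hs0 hse
    have hL1s0 : 0 < Real.log (1/s) := lt_trans (by linarith) hL1s
    have hL2s0 : 0 < Real.log (Real.log (1/s)) := by linarith
    have hA : HasDerivAt (fun s : ℝ => 1/s) (-(s^2)⁻¹) s := by
      simpa [one_div] using hasDerivAt_inv hs0.ne'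
    have hL1 : HasDerivAt (fun s : ℝ => Real.log (1/s)) (-s⁻¹) s := by
      have h := (Real.hasDerivAt_log (one_div_ne_zero hs0.ne')).comp s hA
      convert h using 1 <;> try rfl
      field_simp
    have hL2 : HasDerivAt (fun s : ℝ => Real.log (Real.log (1/s)))
        ((Real.log (1/s))⁻¹ * -s⁻¹) s := by
      have h := (Real.hasDerivAt_log hL1s0.ne').comp s hL1; exact h
    have hL3 : HasDerivAt (fun s : ℝ => Real.log (Real.log (Real.log (1/s))))
        ((Real.log (Real.log (1/s)))⁻¹ * ((Real.log (1/s))⁻¹ * -s⁻¹)) s := by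
      have h := (Real.hasDerivAt_log hL2s0.ne').comp s hL2; exact h
    exact (Real.hasDerivAt_sin _).comp s hL3
  have hmono : ∀ s ∈ Set.Icc t d,
      Real.log (1/d) ≤ Real.log (1/s) ∧
      Real.log (Real.log (1/d)) ≤ Real.log (Real.log (1/s)) := by
    intro s hs
    obtain ⟨hs0, _⟩ := hmem s hs
    have h1 : Real.log (1/d) ≤ Real.log (1/s) := by
      apply Real.log_le_log (by positivity)
      exact one_div_le_one_div_of_le hs0 hs.2
    exact ⟨h1, Real.log_le_log hL1d0 h1⟩
  have hbound : ∀ s ∈ Set.Icc t d, ‖F' s‖ ≤ C := by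
    intro s hs
    obtain ⟨hs0, hse⟩ := hmem s hs
    obtain ⟨hL1s, hL2s⟩ := key s hs0 hse
    have hL1s0 : 0 < Real.log (1/s) := lt_trans (by linarith) hL1s
    have hL2s0 : 0 < Real.log (Real.log (1/s)) := by linarith
    obtain ⟨hm1, hm2⟩ := hmono s hs
    have habs : ‖F' s‖ ≤ (Real.log (Real.log (1/s)))⁻¹ * ((Real.log (1/s))⁻¹ * s⁻¹) := by
      rw [hF', Real.norm_eq_abs, abs_mul]
      have h1 : |((Real.log (Real.log (1/s)))⁻¹ * ((Real.log (1/s))⁻¹ * -s⁻¹))| =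
          (Real.log (Real.log (1/s)))⁻¹ * ((Real.log (1/s))⁻¹ * s⁻¹) := by
        rw [abs_mul, abs_mul, abs_neg, abs_inv, abs_inv, abs_inv,
          abs_of_pos hL2s0, abs_of_pos hL1s0, abs_of_pos hs0]
      rw [h1]
      have := Real.abs_cos_le_one (Real.log (Real.log (Real.log (1/s))))
      nlinarith [inv_pos.mpr hL2s0, inv_pos.mpr hL1s0, inv_pos.mpr hs0,
        mul_pos (mul_pos (inv_pos.mpr hL2s0) (inv_pos.mpr hL1s0)) (inv_pos.mpr hs0)]
    refine le_trans habs ?_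
    rw [hC]
    rw [show (Real.log (Real.log (1/s)))⁻¹ * ((Real.log (1/s))⁻¹ * s⁻¹)
        = 1 / (s * Real.log (Real.log (1/s)) * Real.log (1/s)) by
      field_simp]
    apply one_div_le_one_div_of_le (by positivity)
    have hts : t ≤ s := hs.1
    gcongr
  -- mean value inequality
  have hMVT : ‖F d - F t‖ ≤ C * ‖d - t‖ := by
    apply Convex.norm_image_sub_le_of_norm_hasDerivWithin_le
      (fun s hs => (hderiv s hs).hasDerivWithinAt) hbound (convex_Icc t d)
    · exact ⟨le_refl t, le_of_lt htd⟩
    · exact ⟨le_of_lt htd, le_refl d⟩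
  have hdt : ‖d - t‖ = d - t := by
    rw [Real.norm_eq_abs, abs_of_pos (by linarith)]
  rw [hdt] at hMVT
  -- bound for the cosine term at t
  obtain ⟨hL1t, hL2t⟩ := key t ht0 (lt_trans htd hd)
  have hL1t0 : 0 < Real.log (1/t) := lt_trans (by linarith) hL1t
  have hL2t0 : 0 < Real.log (Real.log (1/t)) := by linarith
  obtain ⟨hm1, hm2⟩ := hmono t ⟨le_refl t, le_of_lt htd⟩
  have hcos : |Real.cos (Real.log (Real.log (Real.log (1/t)))) /
      (Real.log (Real.log (1/t)) * Real.log (1/t))| ≤ t * C := by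
    have hpos : 0 < Real.log (Real.log (1/t)) * Real.log (1/t) := mul_pos hL2t0 hL1t0
    have hpos' : 0 < Real.log (Real.log (1/d)) * Real.log (1/d) := mul_pos hL2d0 hL1d0
    rw [abs_div, abs_of_pos hpos]
    have h2 : |Real.cos (Real.log (Real.log (Real.log (1/t))))| /
        (Real.log (Real.log (1/t)) * Real.log (1/t)) ≤
        1 / (Real.log (Real.log (1/d)) * Real.log (1/d)) :=
      div_le_div₀ zero_le_one (Real.abs_cos_le_one _) hpos'
        (mul_le_mul hm2 hm1 (le_of_lt hL1d0) (le_of_lt hL2t0))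
    refine h2.trans ?_
    rw [hC]
    rw [show t * (1 / (t * Real.log (Real.log (1/d)) * Real.log (1/d)))
        = 1 / (Real.log (Real.log (1/d)) * Real.log (1/d)) by
      field_simp]
  have h1 : |F d - F t| ≤ C * (d - t) := by rw [← Real.norm_eq_abs]; exact hMVT
  have htri : |F d - (F t - Real.cos (Real.log (Real.log (Real.log (1/t)))) /
      (Real.log (Real.log (1/t)) * Real.log (1/t)))| ≤
      |F d - F t| + |Real.cos (Real.log (Real.log (Real.log (1/t)))) /
      (Real.log (Real.log (1/t)) * Real.log (1/t))| := by
    have heq : F d - (F t - Real.cos (Real.log (Real.log (Real.log (1/t)))) /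
        (Real.log (Real.log (1/t)) * Real.log (1/t))) =
        (F d - F t) + Real.cos (Real.log (Real.log (Real.log (1/t)))) /
        (Real.log (Real.log (1/t)) * Real.log (1/t)) := by ring
    rw [heq]
    exact abs_add_le _ _
  calc |F d - (F t - Real.cos (Real.log (Real.log (Real.log (1/t)))) /
          (Real.log (Real.log (1/t)) * Real.log (1/t)))|
      ≤ |F d - F t| + |Real.cos (Real.log (Real.log (Real.log (1/t)))) /
          (Real.log (Real.log (1/t)) * Real.log (1/t))| := htri
    _ ≤ C * (d - t) + t * C := add_le_add h1 hcos
    _ = d * C := by ring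
    _ = d / (t * Real.log (Real.log (1/d)) * Real.log (1/d)) := by
        rw [hC, mul_one_div]
end

section
/- Let d ∈ (0, e^{-e}/2), let w̃(t) = t·sin(log log log(1/|t|)), and let l̃ be the affine function agreeing with w̃ at ±d, so l̃'(t) = sin(log log log(1/d)). Then ∫_{−d}^{d} |(l̃')² − (w̃'(t))²| dt ≤ 40d / (log log(1/d)). -/
/-- The derivative of w̃(t) = t·sin(log log log(1/|t|)) away from 0. -/
noncomputable def wtil' (t : ℝ) : ℝ :=
  Real.sin (Real.log (Real.log (Real.log (1 / |t|)))) -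
    Real.cos (Real.log (Real.log (Real.log (1 / |t|)))) /
      (Real.log (Real.log (1 / |t|)) * Real.log (1 / |t|))

lemma sin_lip' (a b : ℝ) : |Real.sin a - Real.sin b| ≤ |a - b| := by
  rw [Real.sin_sub_sin]
  calc |2 * Real.sin ((a - b) / 2) * Real.cos ((a + b) / 2)|
      = 2 * |Real.sin ((a - b) / 2)| * |Real.cos ((a + b) / 2)| := by
        rw [abs_mul, abs_mul, abs_two]
    _ ≤ 2 * |(a - b) / 2| * 1 :=
        mul_le_mul (by
          have := Real.abs_sin_le_abs (x := (a - b) / 2)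
          nlinarith) (Real.abs_cos_le_one _) (abs_nonneg _) (by positivity)
    _ = |a - b| := by rw [abs_div, abs_two]; ring

/-- Crude global bound on `wtil'` for `|t| ≤ d` with `log (1/d)` large. -/
lemma wtil'_abs_le (d : ℝ) (hd0 : 0 < d) (hE1 : Real.exp 1 < Real.log (1 / d))
    (t : ℝ) (htd : |t| ≤ d) : |wtil' t| ≤ 2 := by
  rcases eq_or_ne t 0 with rfl | ht
  · simp [wtil']
  · have hx0 : 0 < |t| := abs_pos.2 ht
    set a1 := Real.log (1 / |t|) with ha1def
    set a2 := Real.log a1 with ha2def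
    have hE1' : (1 : ℝ) < Real.log (1 / d) :=
      lt_trans (by nlinarith [Real.add_one_le_exp (1 : ℝ)]) hE1
    have ha1 : Real.log (1 / d) ≤ a1 := by
      apply Real.log_le_log (by positivity)
      exact one_div_le_one_div_of_le hx0 htd
    have ha1' : (1 : ℝ) < a1 := lt_of_lt_of_le hE1' ha1
    have ha2 : (1 : ℝ) ≤ a2 := by
      rw [ha2def]
      calc (1 : ℝ) = Real.log (Real.exp 1) := (Real.log_exp 1).symm
        _ ≤ Real.log a1 := Real.log_le_log (Real.exp_pos 1) (le_trans hE1.le ha1)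
    have hden : (1 : ℝ) ≤ a2 * a1 := by nlinarith
    have : |Real.cos (Real.log a2) / (a2 * a1)| ≤ 1 := by
      rw [abs_div]
      rw [div_le_one (lt_of_lt_of_le one_pos (le_trans hden (le_abs_self _)))]
      calc |Real.cos (Real.log a2)| ≤ 1 := Real.abs_cos_le_one _
        _ ≤ a2 * a1 := hden
        _ ≤ |a2 * a1| := le_abs_self _
    calc |wtil' t| ≤ |Real.sin (Real.log a2)| + |Real.cos (Real.log a2) / (a2 * a1)| :=
          abs_sub _ _
      _ ≤ 1 + 1 := add_le_add (Real.abs_sin_le_one _) this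
      _ = 2 := by norm_num

/-- The key estimate on the outer region `d/log(1/d) ≤ |t| ≤ d`. -/
lemma side_bound (d : ℝ) (hd0 : 0 < d) (hE1 : Real.exp 1 < Real.log (1 / d))
    (t : ℝ) (hc : d / Real.log (1 / d) ≤ |t|) (htd : |t| ≤ d) :
    |(Real.sin (Real.log (Real.log (Real.log (1 / d))))) ^ 2 - (wtil' t) ^ 2| ≤
      6 / Real.log (Real.log (1 / d)) := by
  set E1 := Real.log (1 / d) with hE1def
  set E2 := Real.log E1 with hE2def
  have hE1one : (1 : ℝ) < E1 := by
    have := Real.add_one_le_exp (1 : ℝ); nlinarith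
  have hE1pos : (0 : ℝ) < E1 := by linarith
  have hE2one : (1 : ℝ) < E2 := by
    rw [hE2def]
    calc (1 : ℝ) = Real.log (Real.exp 1) := (Real.log_exp 1).symm
      _ < Real.log E1 := Real.log_lt_log (Real.exp_pos 1) hE1
  have hE2pos : (0 : ℝ) < E2 := by linarith
  have hE2leE1 : E2 ≤ E1 := le_trans (Real.log_le_sub_one_of_pos hE1pos) (by linarith)
  have hx0 : 0 < |t| := lt_of_lt_of_le (by positivity) hc
  set a1 := Real.log (1 / |t|) with ha1def
  set a2 := Real.log a1 with ha2def
  set a3 := Real.log a2 with ha3def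
  -- bounds on a1
  have ha1lo : E1 ≤ a1 := by
    apply Real.log_le_log (by positivity)
    exact one_div_le_one_div_of_le hx0 htd
  have ha1hi : a1 ≤ E1 + E2 := by
    have h1 : 1 / |t| ≤ E1 / d := by
      rw [div_le_div_iff₀ hx0 hd0]
      calc 1 * d = d := one_mul d
        _ ≤ E1 * |t| := by
          have h := (div_le_iff₀ hE1pos).mp hc
          nlinarith
    calc a1 ≤ Real.log (E1 / d) := Real.log_le_log (by positivity) h1
      _ = Real.log E1 + Real.log (1 / d) := by
          rw [Real.log_div (ne_of_gt hE1pos) (ne_of_gt hd0)]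
          rw [Real.log_div one_ne_zero (ne_of_gt hd0), Real.log_one]
          ring
      _ = E1 + E2 := by rw [← hE1def, ← hE2def]; ring
  have ha1pos : (0 : ℝ) < a1 := lt_of_lt_of_le hE1pos ha1lo
  -- bounds on a2
  have ha2lo : E2 ≤ a2 := Real.log_le_log hE1pos ha1lo
  have ha2hi : a2 ≤ E2 + E2 / E1 := by
    have key : Real.log (a1 / E1) ≤ E2 / E1 := by
      calc Real.log (a1 / E1) ≤ a1 / E1 - 1 :=
            Real.log_le_sub_one_of_pos (by positivity)
        _ ≤ (E1 + E2) / E1 - 1 := by gcongr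
        _ = E2 / E1 := by field_simp; ring
    have : a2 - E2 = Real.log (a1 / E1) := by
      rw [Real.log_div (ne_of_gt ha1pos) (ne_of_gt hE1pos)]
    linarith
  have ha2pos : (0 : ℝ) < a2 := lt_of_lt_of_le hE2pos ha2lo
  -- bounds on a3
  have ha3lo : Real.log E2 ≤ a3 := Real.log_le_log hE2pos ha2lo
  have ha3hi : a3 - Real.log E2 ≤ 1 / E1 := by
    have : a3 - Real.log E2 = Real.log (a2 / E2) := by
      rw [Real.log_div (ne_of_gt ha2pos) (ne_of_gt hE2pos)]
    rw [this]
    calc Real.log (a2 / E2) ≤ a2 / E2 - 1 := Real.log_le_sub_one_of_pos (by positivity)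
      _ ≤ (E2 + E2 / E1) / E2 - 1 := by gcongr
      _ = 1 / E1 := by field_simp; ring
  -- sin difference
  have hsin : |Real.sin (Real.log E2) - Real.sin a3| ≤ 1 / E1 := by
    calc |Real.sin (Real.log E2) - Real.sin a3| ≤ |Real.log E2 - a3| := sin_lip' _ _
      _ = a3 - Real.log E2 := by rw [abs_sub_comm, abs_of_nonneg (by linarith)]
      _ ≤ 1 / E1 := ha3hi
  -- cos term
  have hcos : |Real.cos a3 / (a2 * a1)| ≤ 1 / (E2 * E1) := by
    rw [abs_div, abs_of_pos (by positivity : (0:ℝ) < a2 * a1)]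
    apply div_le_div₀ (by positivity) (Real.abs_cos_le_one _) (by positivity)
    exact mul_le_mul ha2lo ha1lo (le_of_lt hE1pos) (le_of_lt ha2pos)
  -- difference bound
  have hdiff : |Real.sin (Real.log E2) - wtil' t| ≤ 2 / E2 := by
    have expand : Real.sin (Real.log E2) - wtil' t =
        (Real.sin (Real.log E2) - Real.sin a3) + Real.cos a3 / (a2 * a1) := by
      simp only [wtil', ← ha1def, ← ha2def, ← ha3def]; ring
    calc |Real.sin (Real.log E2) - wtil' t|
        ≤ |Real.sin (Real.log E2) - Real.sin a3| + |Real.cos a3 / (a2 * a1)| := by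
          rw [expand]; exact abs_add_le _ _
      _ ≤ 1 / E1 + 1 / (E2 * E1) := add_le_add hsin hcos
      _ ≤ 1 / E2 + 1 / E2 := by
          apply add_le_add
          · exact one_div_le_one_div_of_le hE2pos hE2leE1
          · apply one_div_le_one_div_of_le hE2pos
            nlinarith
      _ = 2 / E2 := by ring
  -- sum bound
  have hsum : |Real.sin (Real.log E2) + wtil' t| ≤ 3 := by
    have hw : |wtil' t| ≤ 2 := wtil'_abs_le d hd0 hE1 t htd
    calc |Real.sin (Real.log E2) + wtil' t| ≤ |Real.sin (Real.log E2)| + |wtil' t| :=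
          abs_add_le _ _
      _ ≤ 1 + 2 := add_le_add (Real.abs_sin_le_one _) hw
      _ = 3 := by norm_num
  calc |(Real.sin (Real.log E2)) ^ 2 - (wtil' t) ^ 2|
      = |Real.sin (Real.log E2) + wtil' t| * |Real.sin (Real.log E2) - wtil' t| := by
        rw [sq_sub_sq, abs_mul]
    _ ≤ 3 * (2 / E2) := by
        apply mul_le_mul hsum hdiff (abs_nonneg _) (by norm_num)
    _ = 6 / E2 := by ring

/-- For 0 < d < e^{-e}/2, with l̃ the chord of w̃ between ±d (of slope
sin(log log log(1/d))), one has ∫_{−d}^{d} |(l̃')² − (w̃'(t))²| dt ≤ 40d/(log log(1/d)). -/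
theorem stmt13 (d : ℝ) (hd0 : 0 < d) (hd : d < Real.exp (-Real.exp 1) / 2) :
    (∫ t in (-d)..d,
        |(Real.sin (Real.log (Real.log (Real.log (1 / d))))) ^ 2 - (wtil' t) ^ 2|) ≤
      40 * d / Real.log (Real.log (1 / d)) := by
  set L := Real.sin (Real.log (Real.log (Real.log (1 / d)))) with hL
  set f : ℝ → ℝ := fun t => |L ^ 2 - (wtil' t) ^ 2| with hf
  set E1 := Real.log (1 / d) with hE1def
  set E2 := Real.log E1 with hE2def
  have hE1 : Real.exp 1 < E1 := by
    rw [hE1def]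
    have h1 : d < Real.exp (-Real.exp 1) := by
      have := Real.exp_pos (-Real.exp 1); linarith
    have h2 : Real.exp (Real.exp 1) < 1 / d := by
      rw [lt_div_iff₀ hd0]
      calc Real.exp (Real.exp 1) * d < Real.exp (Real.exp 1) * Real.exp (-Real.exp 1) := by
            apply mul_lt_mul_of_pos_left h1 (Real.exp_pos _)
        _ = 1 := by rw [← Real.exp_add]; simp
    calc Real.exp 1 = Real.log (Real.exp (Real.exp 1)) := (Real.log_exp _).symm
      _ < Real.log (1 / d) := Real.log_lt_log (Real.exp_pos _) h2
  have hE1one : (1 : ℝ) < E1 := by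
    have := Real.add_one_le_exp (1 : ℝ); nlinarith
  have hE1pos : (0 : ℝ) < E1 := by linarith
  have hE2one : (1 : ℝ) < E2 := by
    rw [hE2def]
    calc (1 : ℝ) = Real.log (Real.exp 1) := (Real.log_exp 1).symm
      _ < Real.log E1 := Real.log_lt_log (Real.exp_pos 1) hE1
  have hE2pos : (0 : ℝ) < E2 := by linarith
  have hE2leE1 : E2 ≤ E1 := le_trans (Real.log_le_sub_one_of_pos hE1pos) (by linarith)
  set c := d / E1 with hcdef
  have hc0 : 0 < c := by positivity
  have hcd : c < d := by
    rw [hcdef, div_lt_iff₀ hE1pos]; nlinarith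
  -- measurability of f
  have hmeas : Measurable f := by
    apply Measurable.abs
    apply Measurable.sub measurable_const
    apply Measurable.pow _ measurable_const
    unfold wtil'
    have m0 : Measurable fun t : ℝ => Real.log (1 / |t|) :=
      Real.measurable_log.comp (measurable_const.div measurable_abs)
    have m1 : Measurable fun t : ℝ => Real.log (Real.log (1 / |t|)) :=
      Real.measurable_log.comp m0
    have m2 : Measurable fun t : ℝ => Real.log (Real.log (Real.log (1 / |t|))) :=
      Real.measurable_log.comp m1
    exact (Real.measurable_sin.comp m2).sub
      ((Real.measurable_cos.comp m2).div (m1.mul m0))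
  -- global pointwise bound on [-d, d]
  have hglob : ∀ x : ℝ, |x| ≤ d → |f x| ≤ 5 := by
    intro x hx
    have hw : |wtil' x| ≤ 2 := wtil'_abs_le d hd0 hE1 x hx
    have hL1 : |L| ≤ 1 := Real.abs_sin_le_one _
    rw [hf]
    simp only [abs_abs]
    calc |L ^ 2 - (wtil' x) ^ 2| ≤ |L ^ 2| + |(wtil' x) ^ 2| := abs_sub _ _
      _ = |L| ^ 2 + |wtil' x| ^ 2 := by rw [abs_pow, abs_pow]
      _ ≤ 1 ^ 2 + 2 ^ 2 := by gcongr
      _ = 5 := by norm_num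
  -- integrability on [-d, d]
  have hint : IntervalIntegrable f MeasureTheory.volume (-d) d := by
    apply IntervalIntegrable.mono_fun' (g := fun _ => (5 : ℝ)) intervalIntegrable_const
    · exact hmeas.aestronglyMeasurable
    · apply MeasureTheory.ae_restrict_of_forall_mem measurableSet_uIoc
      intro x hx
      have : |x| ≤ d := by
        rcases Set.mem_uIoc.mp hx with h | h
        · rw [abs_le]; constructor <;> [linarith [h.1]; exact h.2]
        · rw [abs_le]; constructor <;> [linarith [h.1.le]; linarith [h.2, hd0]]
      simpa [Real.norm_eq_abs] using hglob x this
  have hsub1 : IntervalIntegrable f MeasureTheory.volume (-d) (-c) :=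
    hint.mono_set (Set.uIcc_subset_uIcc (Set.mem_uIcc.2 (Or.inl ⟨by linarith, by linarith⟩))
      (Set.mem_uIcc.2 (Or.inl ⟨by linarith, by linarith⟩)))
  have hsub2 : IntervalIntegrable f MeasureTheory.volume (-c) c :=
    hint.mono_set (Set.uIcc_subset_uIcc (Set.mem_uIcc.2 (Or.inl ⟨by linarith, by linarith⟩))
      (Set.mem_uIcc.2 (Or.inl ⟨by linarith, by linarith⟩)))
  have hsub3 : IntervalIntegrable f MeasureTheory.volume c d :=
    hint.mono_set (Set.uIcc_subset_uIcc (Set.mem_uIcc.2 (Or.inl ⟨by linarith, by linarith⟩))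
      (Set.mem_uIcc.2 (Or.inl ⟨by linarith, by linarith⟩)))
  have hsub12 : IntervalIntegrable f MeasureTheory.volume (-d) c :=
    hint.mono_set (Set.uIcc_subset_uIcc (Set.mem_uIcc.2 (Or.inl ⟨by linarith, by linarith⟩))
      (Set.mem_uIcc.2 (Or.inl ⟨by linarith, by linarith⟩)))
  have hsplit : (∫ t in (-d)..d, f t) =
      (∫ t in (-d)..(-c), f t) + (∫ t in (-c)..c, f t) + (∫ t in c..d, f t) := by
    rw [intervalIntegral.integral_add_adjacent_intervals hsub1 hsub2,
      intervalIntegral.integral_add_adjacent_intervals hsub12 hsub3]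
  -- bound on side intervals
  have hbound1 : (∫ t in (-d)..(-c), f t) ≤ 6 / E2 * d := by
    calc (∫ t in (-d)..(-c), f t) ≤ ‖∫ t in (-d)..(-c), f t‖ := le_abs_self _
      _ ≤ 6 / E2 * |(-c) - (-d)| := by
          apply intervalIntegral.norm_integral_le_of_norm_le_const
          intro x hx
          rw [Set.uIoc_of_le (by linarith : -d ≤ -c)] at hx
          obtain ⟨h1, h2⟩ := hx
          have habs : |x| = -x := abs_of_neg (by linarith)
          have h3 : c ≤ |x| := by rw [habs]; linarith
          have h4 : |x| ≤ d := by rw [habs]; linarith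
          rw [Real.norm_eq_abs, abs_abs]
          exact side_bound d hd0 hE1 x h3 h4
      _ ≤ 6 / E2 * d := by
          apply mul_le_mul_of_nonneg_left _ (by positivity)
          rw [abs_of_nonneg (by linarith)]; linarith
  have hbound3 : (∫ t in c..d, f t) ≤ 6 / E2 * d := by
    calc (∫ t in c..d, f t) ≤ ‖∫ t in c..d, f t‖ := le_abs_self _
      _ ≤ 6 / E2 * |d - c| := by
          apply intervalIntegral.norm_integral_le_of_norm_le_const
          intro x hx
          rw [Set.uIoc_of_le (by linarith : c ≤ d)] at hx
          obtain ⟨h1, h2⟩ := hx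
          have habs : |x| = x := abs_of_pos (by linarith)
          rw [Real.norm_eq_abs, abs_abs]
          exact side_bound d hd0 hE1 x (by rw [habs]; linarith) (by rw [habs]; linarith)
      _ ≤ 6 / E2 * d := by
          apply mul_le_mul_of_nonneg_left _ (by positivity)
          rw [abs_of_nonneg (by linarith)]; linarith
  -- bound on middle interval
  have hbound2 : (∫ t in (-c)..c, f t) ≤ 10 * d / E2 := by
    calc (∫ t in (-c)..c, f t) ≤ ‖∫ t in (-c)..c, f t‖ := le_abs_self _
      _ ≤ 5 * |c - (-c)| := by
          apply intervalIntegral.norm_integral_le_of_norm_le_const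
          intro x hx
          rw [Set.uIoc_of_le (by linarith : -c ≤ c)] at hx
          obtain ⟨h1, h2⟩ := hx
          have : |x| ≤ d := by rw [abs_le]; constructor <;> linarith
          simpa [Real.norm_eq_abs] using hglob x this
      _ = 10 * c := by rw [abs_of_nonneg (by linarith)]; ring
      _ = 10 * d / E1 := by rw [hcdef]; ring
      _ ≤ 10 * d / E2 := by
          apply div_le_div_of_nonneg_left (by positivity) hE2pos hE2leE1
  calc (∫ t in (-d)..d, f t)
      = (∫ t in (-d)..(-c), f t) + (∫ t in (-c)..c, f t) + (∫ t in c..d, f t) := hsplit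
    _ ≤ 6 / E2 * d + 10 * d / E2 + 6 / E2 * d :=
        add_le_add (add_le_add hbound1 hbound2) hbound3
    _ = 22 * d / E2 := by ring
    _ ≤ 40 * d / E2 := by
        rw [div_le_div_iff₀ hE2pos hE2pos]
        nlinarith
end
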